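/- A closed set S ⊆ ℝⁿ is piecewise polyhedral (i.e., the union of finitely many polyhedra) if and only if the 1-norm distance function x ↦ dist₁(x;S) := min_{s∈S} ‖s − x‖₁ is a piecewise affine function on ℝⁿ. -/

import Mathlib

open Filter Topology Set

noncomputable section

/-- The 1-norm on `Fin n → ℝ`. -/
def n1 {n : ℕ} (v : Fin n → ℝ) : ℝ := ∑ i, |v i|

/-- A polyhedron `{x : Ax ≤ b}`. -/
def IsPolyhedron {n : ℕ} (S : Set (Fin n → ℝ)) : Prop :=
  ∃ (m : ℕ) (A : Matrix (Fin m) (Fin n) ℝ) (b : Fin m → ℝ),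
    S = {x | ∀ i, (∑ j, A i j * x j) ≤ b i}

/-- A set is piecewise polyhedral if it is the union of finitely many polyhedra. -/
def IsPiecewisePolyhedral {n : ℕ} (S : Set (Fin n → ℝ)) : Prop :=
  ∃ (I : ℕ) (P : Fin I → Set (Fin n → ℝ)), (∀ i, IsPolyhedron (P i)) ∧ S = ⋃ i, P i

/-- A continuous function `g : ℝⁿ → ℝ` is piecewise affine: `ℝⁿ` is the union of finitely
many polyhedra on each of which `g` agrees with an affine function. -/
def IsPiecewiseAffine {n : ℕ} (g : (Fin n → ℝ) → ℝ) : Prop :=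
  Continuous g ∧ ∃ (I : ℕ) (P : Fin I → Set (Fin n → ℝ))
    (a : Fin I → Fin n → ℝ) (β : Fin I → ℝ),
    (∀ i, IsPolyhedron (P i)) ∧ (⋃ i, P i) = Set.univ ∧
    ∀ i, ∀ x ∈ P i, g x = (∑ j, a i j * x j) + β i

/-- The 1-norm distance function to a set `S`. -/
def dist1 {n : ℕ} (x : Fin n → ℝ) (S : Set (Fin n → ℝ)) : ℝ :=
  sInf ((fun s => n1 (s - x)) '' S)

variable {E F : Type} [AddCommGroup E] [Module ℝ E] [AddCommGroup F] [Module ℝ F]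

/-- Abstract polyhedron predicate. -/
def IsLPoly (S : Set E) : Prop :=
  ∃ (ι : Type) (_ : Fintype ι) (f : ι → E →ₗ[ℝ] ℝ) (b : ι → ℝ),
    S = {x | ∀ i, f i x ≤ b i}

lemma linear_eq_sum {n : ℕ} (f : (Fin n → ℝ) →ₗ[ℝ] ℝ) (x : Fin n → ℝ) :
    f x = ∑ j, f (Pi.single j 1) * x j := by
  have hx : x = ∑ j, x j • (Pi.single j 1 : Fin n → ℝ) := by
    funext k
    simp [Pi.single_apply, Finset.sum_ite_eq', mul_comm]
  conv_lhs => rw [hx]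
  rw [map_sum]
  simp [mul_comm]

lemma isPolyhedron_iff_isPoly {n : ℕ} (S : Set (Fin n → ℝ)) :
    IsPolyhedron S ↔ IsLPoly S := by
  constructor
  · rintro ⟨m, A, b, rfl⟩
    refine ⟨Fin m, inferInstance, fun i => ∑ j, A i j • LinearMap.proj j, b, ?_⟩
    ext x
    simp [LinearMap.sum_apply, smul_eq_mul]
  · rintro ⟨ι, _, f, b, rfl⟩
    classical
    refine ⟨Fintype.card ι, fun i j => f ((Fintype.equivFin ι).symm i) (Pi.single j 1),
      fun i => b ((Fintype.equivFin ι).symm i), ?_⟩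
    ext x
    constructor
    · intro hx i
      rw [← linear_eq_sum]
      exact hx _
    · intro hx i
      have := hx (Fintype.equivFin ι i)
      rw [← linear_eq_sum] at this
      simpa using this

lemma IsLPoly.preimage (g : F →ₗ[ℝ] E) {S : Set E} (h : IsLPoly S) : IsLPoly (g ⁻¹' S) := by
  obtain ⟨ι, _, f, b, rfl⟩ := h
  exact ⟨ι, inferInstance, fun i => (f i).comp g, b, rfl⟩

lemma IsLPoly.inter {S T : Set E} (hS : IsLPoly S) (hT : IsLPoly T) : IsLPoly (S ∩ T) := by
  obtain ⟨ι, _, f, b, rfl⟩ := hS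
  obtain ⟨κ, _, g, c, rfl⟩ := hT
  refine ⟨ι ⊕ κ, inferInstance, Sum.elim f g, Sum.elim b c, ?_⟩
  ext x
  simp [Sum.forall, mem_setOf_eq]


lemma IsLPoly.proj_real {S : Set (E × ℝ)} (h : IsLPoly S) :
    IsLPoly {x | ∃ y, (x, y) ∈ S} := by
  classical
  obtain ⟨ι, _, f, b, rfl⟩ := h
  set g : ι → E →ₗ[ℝ] ℝ := fun i => (f i).comp (LinearMap.inl ℝ E ℝ) with hg
  set c : ι → ℝ := fun i => f i (0, 1) with hc
  have hf : ∀ i x y, f i (x, y) = g i x + y * c i := by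
    intro i x y
    have hxy : (x, y) = (x, (0:ℝ)) + y • ((0:E), (1:ℝ)) := by
      simp [Prod.ext_iff]
    rw [hxy, map_add, map_smul, smul_eq_mul]
    rfl
  refine ⟨{i // c i = 0} ⊕ ({i // 0 < c i} × {i // c i < 0}), inferInstance,
    Sum.elim (fun i => g i.1) (fun pm => c pm.1.1 • g pm.2.1 - c pm.2.1 • g pm.1.1),
    Sum.elim (fun i => b i.1) (fun pm => c pm.1.1 * b pm.2.1 - c pm.2.1 * b pm.1.1), ?_⟩
  ext x
  simp only [mem_setOf_eq, Sum.forall, Subtype.forall, Prod.forall]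
  constructor
  · rintro ⟨y, hy⟩
    constructor
    · intro i hi
      have := hy i
      rw [hf] at this
      simpa [hi] using this
    · intro p hp m hm
      have h1 := hy p
      have h2 := hy m
      rw [hf] at h1 h2
      simp only [Sum.elim_inr, LinearMap.sub_apply, LinearMap.smul_apply, smul_eq_mul]
      nlinarith [mul_le_mul_of_nonneg_left h2 (le_of_lt hp),
        mul_le_mul_of_nonpos_left h1 (le_of_lt hm)]
  · rintro ⟨h0, hpm⟩
    by_cases hp : Nonempty {i // 0 < c i}
    · haveI := hp
      set y : ℝ := Finset.univ.inf' Finset.univ_nonempty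
        (fun p : {i // 0 < c i} => (b p.1 - g p.1 x) / c p.1) with hy
      refine ⟨y, fun i => ?_⟩
      rw [hf]
      rcases lt_trichotomy (c i) 0 with hci | hci | hci
      · -- need y ≥ (b i - g i x) / c i
        have hlow : (b i - g i x) / c i ≤ y := by
          rw [hy]
          apply Finset.le_inf'
          rintro ⟨p, hpi⟩ _
          have key := hpm p hpi i hci
          simp only [Sum.elim_inr, LinearMap.sub_apply, LinearMap.smul_apply,
            smul_eq_mul] at key
          have e1 : (b i - g i x) / c i = (g i x - b i) / (-c i) := by
            rw [← neg_div_neg_eq]; ring_nf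
          rw [e1, div_le_div_iff₀ (by linarith) hpi]
          nlinarith
        have := mul_le_mul_of_nonpos_right hlow (le_of_lt hci)
        rw [div_mul_cancel₀ _ (ne_of_lt hci)] at this
        linarith [this]
      · simpa [hci] using h0 i hci
      · have hup : y ≤ (b i - g i x) / c i :=
          Finset.inf'_le _ (Finset.mem_univ (⟨i, hci⟩ : {i // 0 < c i}))
        have := mul_le_mul_of_nonneg_right hup (le_of_lt hci)
        rw [div_mul_cancel₀ _ (ne_of_gt hci)] at this
        linarith
    · by_cases hm : Nonempty {i // c i < 0}
      · haveI := hm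
        set y : ℝ := Finset.univ.sup' Finset.univ_nonempty
          (fun m : {i // c i < 0} => (b m.1 - g m.1 x) / c m.1) with hy
        refine ⟨y, fun i => ?_⟩
        rw [hf]
        rcases lt_trichotomy (c i) 0 with hci | hci | hci
        · have hlow : (b i - g i x) / c i ≤ y :=
            Finset.le_sup' (fun m : {i // c i < 0} => (b m.1 - g m.1 x) / c m.1)
              (Finset.mem_univ (⟨i, hci⟩ : {i // c i < 0}))
          have := mul_le_mul_of_nonpos_right hlow (le_of_lt hci)
          rw [div_mul_cancel₀ _ (ne_of_lt hci)] at this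
          linarith [this]
        · simpa [hci] using h0 i hci
        · exact absurd ⟨⟨i, hci⟩⟩ hp
      · refine ⟨0, fun i => ?_⟩
        rw [hf]
        rcases lt_trichotomy (c i) 0 with hci | hci | hci
        · exact absurd ⟨⟨i, hci⟩⟩ hm
        · simpa [hci] using h0 i hci
        · exact absurd ⟨⟨i, hci⟩⟩ hp

/-- Snoc as a linear map. -/
def snocLM (k : ℕ) : ((Fin k → ℝ) × ℝ) →ₗ[ℝ] (Fin (k+1) → ℝ) where
  toFun p := Fin.snoc p.1 p.2
  map_add' p q := by
    funext j
    refine Fin.lastCases ?_ (fun j => ?_) j <;> simp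
  map_smul' r p := by
    funext j
    refine Fin.lastCases ?_ (fun j => ?_) j <;> simp

lemma IsLPoly.proj_pi {k : ℕ} {S : Set (E × (Fin k → ℝ))} (h : IsLPoly S) :
    IsLPoly {x | ∃ y, (x, y) ∈ S} := by
  induction k with
  | zero =>
    have : {x | ∃ y, (x, y) ∈ S} = (LinearMap.inl ℝ E (Fin 0 → ℝ)) ⁻¹' S := by
      ext x
      constructor
      · rintro ⟨y, hy⟩
        have : y = 0 := Subsingleton.elim _ _
        simpa [this] using hy
      · intro hx
        exact ⟨0, hx⟩
    rw [this]
    exact h.preimage _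
  | succ k ih =>
    set L : ((E × (Fin k → ℝ)) × ℝ) →ₗ[ℝ] (E × (Fin (k+1) → ℝ)) :=
      (LinearMap.id.prodMap (snocLM k)).comp (LinearEquiv.prodAssoc ℝ E (Fin k → ℝ) ℝ).toLinearMap with hL
    have hT : IsLPoly (L ⁻¹' S) := h.preimage _
    have hU := hT.proj_real
    have hV := ih hU
    have : {x | ∃ y, (x, y) ∈ S} = {x | ∃ y, (x, y) ∈ {z : E × (Fin k → ℝ) | ∃ t, (z, t) ∈ L ⁻¹' S}} := by
      ext x
      constructor
      · rintro ⟨y, hy⟩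
        refine ⟨Fin.init y, y (Fin.last k), ?_⟩
        simp only [mem_preimage, hL, LinearMap.comp_apply, LinearMap.prodMap_apply,
          LinearEquiv.coe_coe, LinearEquiv.prodAssoc_apply, LinearMap.id_apply]
        simpa [snocLM, Fin.snoc_init_self] using hy
      · rintro ⟨y, t, hy⟩
        refine ⟨Fin.snoc y t, ?_⟩
        simpa [hL, snocLM] using hy
    rw [this]
    exact hV

lemma IsLPoly.proj_equiv {k : ℕ} (e : F ≃ₗ[ℝ] (Fin k → ℝ)) {S : Set (E × F)}
    (h : IsLPoly S) : IsLPoly {x | ∃ y, (x, y) ∈ S} := by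
  have h2 : IsLPoly ((LinearMap.id.prodMap e.symm.toLinearMap) ⁻¹' S) := h.preimage _
  have h3 := h2.proj_pi
  have : {x | ∃ y, (x, y) ∈ S}
      = {x | ∃ v, (x, v) ∈ (LinearMap.id.prodMap e.symm.toLinearMap) ⁻¹' S} := by
    ext x
    constructor
    · rintro ⟨y, hy⟩
      exact ⟨e y, by simpa using hy⟩
    · rintro ⟨v, hv⟩
      exact ⟨e.symm v, by simpa using hv⟩
  rw [this]
  exact h3

/-- A linear equivalence between pairs of vectors and long vectors. -/
def pairEquiv (n : ℕ) : ((Fin n → ℝ) × (Fin n → ℝ)) ≃ₗ[ℝ] (Fin (n + n) → ℝ) :=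
  (LinearEquiv.sumArrowLequivProdArrow (Fin n) (Fin n) ℝ ℝ).symm.trans
    (LinearEquiv.funCongrLeft ℝ ℝ (finSumFinEquiv (m := n) (n := n))).symm

lemma n1_nonneg {n : ℕ} (v : Fin n → ℝ) : 0 ≤ n1 v :=
  Finset.sum_nonneg fun i _ => abs_nonneg _

lemma n1_add_le {n : ℕ} (v w : Fin n → ℝ) : n1 (v + w) ≤ n1 v + n1 w := by
  rw [n1, n1, n1, ← Finset.sum_add_distrib]
  exact Finset.sum_le_sum fun i _ => abs_add_le _ _

lemma n1_zero {n : ℕ} : n1 (0 : Fin n → ℝ) = 0 := by simp [n1]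

variable {n : ℕ} {S : Set (Fin n → ℝ)}

lemma dist1_bddBelow (x : Fin n → ℝ) : BddBelow ((fun s => n1 (s - x)) '' S) :=
  ⟨0, by rintro r ⟨s, _, rfl⟩; exact n1_nonneg _⟩

lemma dist1_le (x : Fin n → ℝ) {s : Fin n → ℝ} (hs : s ∈ S) : dist1 x S ≤ n1 (s - x) :=
  csInf_le (dist1_bddBelow x) ⟨s, hs, rfl⟩

lemma dist1_nonneg (hne : S.Nonempty) (x : Fin n → ℝ) : 0 ≤ dist1 x S :=
  le_csInf (hne.image _) (by rintro r ⟨s, _, rfl⟩; exact n1_nonneg _)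

lemma dist1_exists_lt (hne : S.Nonempty) {x : Fin n → ℝ} {r : ℝ} (hr : dist1 x S < r) :
    ∃ s ∈ S, n1 (s - x) < r := by
  obtain ⟨_, ⟨s, hs, rfl⟩, hlt⟩ := exists_lt_of_csInf_lt (hne.image _) hr
  exact ⟨s, hs, hlt⟩

lemma dist_le_n1 (x s : Fin n → ℝ) : dist x s ≤ n1 (s - x) := by
  rw [dist_pi_le_iff (n1_nonneg _)]
  intro i
  rw [Real.dist_eq, abs_sub_comm]
  have h := Finset.single_le_sum (f := fun j => |(s - x) j|)
    (fun j _ => abs_nonneg _) (Finset.mem_univ i)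
  simpa [n1] using h

lemma dist1_eq_zero_iff (hcl : IsClosed S) (hne : S.Nonempty) (x : Fin n → ℝ) :
    dist1 x S = 0 ↔ x ∈ S := by
  constructor
  · intro h
    rw [← hcl.closure_eq, Metric.mem_closure_iff]
    intro ε hε
    obtain ⟨s, hs, hlt⟩ := dist1_exists_lt hne (h ▸ hε : dist1 x S < ε)
    exact ⟨s, hs, lt_of_le_of_lt (dist_le_n1 x s) hlt⟩
  · intro hx
    refine le_antisymm ?_ (dist1_nonneg hne x)
    have := dist1_le x hx
    simpa [n1_zero] using this

lemma dist1_lipschitz (x y : Fin n → ℝ) (hne : S.Nonempty) :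
    dist1 x S ≤ dist1 y S + n1 (y - x) := by
  have key : dist1 x S - n1 (y - x) ≤ dist1 y S := by
    refine le_csInf (hne.image _) ?_
    rintro r ⟨s, hs, rfl⟩
    have h1 : dist1 x S ≤ n1 (s - x) := dist1_le x hs
    have h2 : n1 (s - x) ≤ n1 (s - y) + n1 (y - x) := by
      have h3 := n1_add_le (s - y) (y - x)
      rw [sub_add_sub_cancel] at h3
      exact h3
    linarith
  linarith

lemma dist1_continuous (hne : S.Nonempty) : Continuous (fun x => dist1 x S) := by
  rw [Metric.continuous_iff]
  intro b ε hε
  refine ⟨ε / (n + 1), by positivity, fun a ha => ?_⟩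
  have hn1 : n1 (a - b) ≤ n * dist a b := by
    rw [n1]
    calc ∑ i, |(a - b) i| ≤ ∑ _i : Fin n, dist a b := by
          refine Finset.sum_le_sum fun i _ => ?_
          have := dist_le_pi_dist a b i
          rwa [Real.dist_eq] at this
    _ = n * dist a b := by simp [mul_comm]
  have hn2 : n1 (b - a) ≤ n * dist a b := by
    rw [n1]
    calc ∑ i, |(b - a) i| ≤ ∑ _i : Fin n, dist a b := by
          refine Finset.sum_le_sum fun i _ => ?_
          have := dist_le_pi_dist b a i
          rw [Real.dist_eq, dist_comm] at this
          simpa using this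
    _ = n * dist a b := by simp [mul_comm]
  have h1 := dist1_lipschitz a b hne
  have h2 := dist1_lipschitz b a hne
  rw [Real.dist_eq, abs_lt]
  have hd : (n : ℝ) * dist a b < ε := by
    have h3 : ((n : ℝ) + 1) * dist a b < ε := by
      rw [← lt_div_iff₀' (by positivity)]
      exact ha
    nlinarith [dist_nonneg (x := a) (y := b)]
  constructor <;> nlinarith

lemma dist1_iUnion {K : Type} [Fintype K] [Nonempty K] (P : K → Set (Fin n → ℝ))
    (hne : ∀ i, (P i).Nonempty) (x : Fin n → ℝ) :
    dist1 x (⋃ i, P i) = Finset.univ.inf' Finset.univ_nonempty (fun i => dist1 x (P i)) := by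
  refine le_antisymm ?_ ?_
  · obtain ⟨i0, hi0, hmin⟩ := Finset.exists_mem_eq_inf' (Finset.univ_nonempty (α := K))
      (fun i => dist1 x (P i))
    rw [hmin]
    refine le_csInf ((hne i0).image _) ?_
    rintro r ⟨s, hs, rfl⟩
    exact dist1_le x (mem_iUnion.2 ⟨i0, hs⟩)
  · refine le_csInf (((hne (Classical.arbitrary K)).mono (subset_iUnion P _)).image _) ?_
    rintro r ⟨s, hs, rfl⟩
    obtain ⟨i, hi⟩ := mem_iUnion.1 hs
    exact le_trans (Finset.inf'_le _ (Finset.mem_univ i)) (dist1_le x hi)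

lemma le_of_forall_pos_le_add' {a b M : ℝ} (hM : 0 ≤ M) (h : ∀ ε > 0, a ≤ b + ε * M) :
    a ≤ b := by
  by_contra hc
  push_neg at hc
  have hε : 0 < (a - b) / (2 * (M + 1)) := div_pos (by linarith) (by positivity)
  have h1 := h _ hε
  have h2 : (a - b) / (2 * (M + 1)) * M ≤ (a - b) / 2 := by
    rw [div_mul_eq_mul_div, div_le_div_iff₀ (by positivity) (by norm_num)]
    nlinarith
  linarith

lemma dist1_poly_max {n : ℕ} {P : Set (Fin n → ℝ)} (hP : IsLPoly P) (hPne : P.Nonempty) :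
    ∃ (J : Type) (_ : Fintype J) (_ : Nonempty J) (a : J → (Fin n → ℝ) →ₗ[ℝ] ℝ) (β : J → ℝ),
      ∀ x, dist1 x P = Finset.univ.sup' Finset.univ_nonempty (fun j => a j x + β j) := by
  classical
  set W := ((Fin n → ℝ) × ℝ) × ((Fin n → ℝ) × (Fin n → ℝ)) with hW
  set Y : W →ₗ[ℝ] (Fin n → ℝ) :=
    (LinearMap.fst ℝ (Fin n → ℝ) (Fin n → ℝ)).comp
      (LinearMap.snd ℝ ((Fin n → ℝ) × ℝ) ((Fin n → ℝ) × (Fin n → ℝ))) with hY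
  set Q : Set W := {w | w.2.1 ∈ P ∧ (∀ j, w.2.1 j - w.1.1 j ≤ w.2.2 j) ∧
    (∀ j, w.1.1 j - w.2.1 j ≤ w.2.2 j) ∧ (∑ j, w.2.2 j) ≤ w.1.2} with hQdef
  -- Q is a polyhedron
  have hQ : IsLPoly Q := by
    have h1 : IsLPoly (Y ⁻¹' P) := hP.preimage Y
    obtain ⟨ι, _, f, b, hfb⟩ := h1
    set XC : Fin n → W →ₗ[ℝ] ℝ := fun j => (LinearMap.proj j).comp
      ((LinearMap.fst ℝ (Fin n → ℝ) ℝ).comp (LinearMap.fst ℝ ((Fin n → ℝ) × ℝ) ((Fin n → ℝ) × (Fin n → ℝ)))) with hXC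
    set RC : W →ₗ[ℝ] ℝ := (LinearMap.snd ℝ (Fin n → ℝ) ℝ).comp
      (LinearMap.fst ℝ ((Fin n → ℝ) × ℝ) ((Fin n → ℝ) × (Fin n → ℝ))) with hRC
    set YC : Fin n → W →ₗ[ℝ] ℝ := fun j => (LinearMap.proj j).comp Y with hYC
    set TC : Fin n → W →ₗ[ℝ] ℝ := fun j => (LinearMap.proj j).comp
      ((LinearMap.snd ℝ (Fin n → ℝ) (Fin n → ℝ)).comp
        (LinearMap.snd ℝ ((Fin n → ℝ) × ℝ) ((Fin n → ℝ) × (Fin n → ℝ)))) with hTC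
    refine ⟨ι ⊕ ((Fin n ⊕ Fin n) ⊕ Unit), inferInstance,
      (Sum.elim (fun i => f i)
        (Sum.elim (Sum.elim (fun j => YC j - XC j - TC j) (fun j => XC j - YC j - TC j))
          (fun _ => (∑ j, TC j) - RC)) : ι ⊕ ((Fin n ⊕ Fin n) ⊕ Unit) → W →ₗ[ℝ] ℝ),
      Sum.elim b (fun _ => 0), ?_⟩
    ext w
    have hmem : w.2.1 ∈ P ↔ ∀ i, f i w ≤ b i := by
      have h2 : w ∈ Y ⁻¹' P ↔ w ∈ {x | ∀ i, f i x ≤ b i} := by rw [hfb]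
      exact h2
    have hsum : (∑ j, TC j w) = ∑ j, w.2.2 j := Finset.sum_congr rfl (fun j _ => rfl)
    simp only [hQdef, mem_setOf_eq, Sum.forall, Sum.elim_inl, Sum.elim_inr,
      LinearMap.sub_apply, LinearMap.sum_apply]
    constructor
    · rintro ⟨hw1, hw2, hw3, hw4⟩
      refine ⟨fun i => hmem.1 hw1 i, ⟨fun j => ?_, fun j => ?_⟩, fun _ => ?_⟩
      · show w.2.1 j - w.1.1 j - w.2.2 j ≤ 0
        linarith [hw2 j]
      · show w.1.1 j - w.2.1 j - w.2.2 j ≤ 0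
        linarith [hw3 j]
      · rw [hsum]
        show (∑ j, w.2.2 j) - w.1.2 ≤ 0
        linarith [hw4]
    · rintro ⟨hw1, ⟨hw2, hw3⟩, hw4⟩
      have hw2' : ∀ j, w.2.1 j - w.1.1 j - w.2.2 j ≤ 0 := hw2
      have hw3' : ∀ j, w.1.1 j - w.2.1 j - w.2.2 j ≤ 0 := hw3
      have hw4' : (∑ j, TC j w) - w.1.2 ≤ 0 := hw4 ()
      rw [hsum] at hw4'
      exact ⟨hmem.2 hw1, fun j => by linarith [hw2' j], fun j => by linarith [hw3' j],
        by linarith [hw4']⟩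
  -- the epigraph is a polyhedron
  have hepi : IsLPoly {p : (Fin n → ℝ) × ℝ | ∃ w, (p, w) ∈ Q} := hQ.proj_equiv (pairEquiv n)
  obtain ⟨ι, _, F, bb, hrep⟩ := hepi
  set g : ι → ((Fin n → ℝ) →ₗ[ℝ] ℝ) := fun i => (F i).comp (LinearMap.inl ℝ (Fin n → ℝ) ℝ) with hg
  set c : ι → ℝ := fun i => F i (0, 1) with hc
  have hFdec : ∀ i (x : Fin n → ℝ) (r : ℝ), F i (x, r) = g i x + r * c i := by
    intro i x r
    have hxy : ((x, r) : (Fin n → ℝ) × ℝ) = (x, (0:ℝ)) + r • ((0 : Fin n → ℝ), (1:ℝ)) := by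
      simp [Prod.ext_iff]
    rw [hxy, map_add, map_smul, smul_eq_mul]
    rfl
  -- characterization of the epigraph
  have keyA : ∀ (x : Fin n → ℝ) (r : ℝ), dist1 x P ≤ r → ∀ ε > 0,
      ∃ w, (((x, r + ε), w) : W) ∈ Q := by
    intro x r hr ε hε
    obtain ⟨s, hs, hlt⟩ := dist1_exists_lt hPne (lt_of_le_of_lt hr (by linarith) : dist1 x P < r + ε)
    refine ⟨(s, fun j => |s j - x j|), hs, fun j => ?_, fun j => ?_, ?_⟩
    · exact le_abs_self _
    · show x j - s j ≤ |s j - x j|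
      rw [abs_sub_comm]
      exact le_abs_self _
    · show (∑ j, |s j - x j|) ≤ r + ε
      have : n1 (s - x) = ∑ j, |s j - x j| := by simp [n1]
      rw [← this]
      exact hlt.le
  have keyB : ∀ (x : Fin n → ℝ) (r : ℝ), (∃ w, (((x, r), w) : W) ∈ Q) → dist1 x P ≤ r := by
    rintro x r ⟨w, hw1, hw2, hw3, hw4⟩
    have h1 : dist1 x P ≤ n1 (w.1 - x) := dist1_le x hw1
    have h2 : n1 (w.1 - x) ≤ ∑ j, w.2 j := by
      rw [n1]
      refine Finset.sum_le_sum fun j _ => ?_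
      rw [Pi.sub_apply, abs_le]
      exact ⟨by linarith [hw3 j], hw2 j⟩
    linarith
  have hchar : ∀ (x : Fin n → ℝ) (r : ℝ),
      dist1 x P ≤ r ↔ ∀ i, g i x + r * c i ≤ bb i := by
    intro x r
    constructor
    · intro hr i
      have hεmem : ∀ ε > 0, g i x + (r + ε) * c i ≤ bb i := by
        intro ε hε
        obtain ⟨w, hw⟩ := keyA x r hr ε hε
        have hm : ((x, r + ε) : (Fin n → ℝ) × ℝ) ∈ {p | ∃ w, (p, w) ∈ Q} := ⟨w, hw⟩
        rw [hrep] at hm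
        have := hm i
        rwa [hFdec] at this
      refine le_of_forall_pos_le_add' (abs_nonneg (c i)) fun ε hε => ?_
      have := hεmem ε hε
      have habs : -(ε * c i) ≤ ε * |c i| := by
        rw [← mul_neg]
        exact mul_le_mul_of_nonneg_left (neg_le_abs _) hε.le
      nlinarith
    · intro hi
      refine keyB x r ?_
      have : ((x, r) : (Fin n → ℝ) × ℝ) ∈ {p | ∀ i, F i p ≤ bb i} := by
        intro i
        rw [hFdec]
        exact hi i
      rw [← hrep] at this
      exact this
  -- all c i are nonpositive
  have hcle : ∀ i, c i ≤ 0 := by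
    intro i
    by_contra hci
    push_neg at hci
    set r0 : ℝ := max (dist1 0 P) ((bb i + 1 - g i 0) / c i) with hr0
    have h1 := (hchar 0 r0).1 (le_max_left _ _) i
    have h2 : (bb i + 1 - g i 0) / c i ≤ r0 := le_max_right _ _
    rw [div_le_iff₀ hci] at h2
    nlinarith
  -- the negative rows are nonempty
  have hJne : Nonempty {i // c i < 0} := by
    by_contra hJ
    push_neg at hJ
    have hc0 : ∀ i, c i = 0 := by
      intro i
      rcases lt_or_eq_of_le (hcle i) with h | h
      · exact (IsEmpty.false (⟨i, h⟩ : {i // c i < 0})).elim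
      · exact h
    have h1 := (hchar 0 (dist1 0 P)).1 le_rfl
    have h2 : dist1 0 P ≤ dist1 0 P - 1 := by
      refine (hchar 0 (dist1 0 P - 1)).2 fun i => ?_
      have := h1 i
      rw [hc0 i] at this ⊢
      linarith
    linarith
  refine ⟨{i // c i < 0}, inferInstance, hJne, fun j => (-(c j.1))⁻¹ • g j.1,
    fun j => bb j.1 * (c j.1)⁻¹, ?_⟩
  intro x
  haveI := hJne
  have hform : ∀ j : {i // c i < 0}, ((-(c j.1))⁻¹ • g j.1) x + bb j.1 * (c j.1)⁻¹
      = (bb j.1 - g j.1 x) / c j.1 := by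
    intro j
    have hne0 : c j.1 ≠ 0 := ne_of_lt j.2
    rw [LinearMap.smul_apply, smul_eq_mul]
    field_simp
    ring
  refine le_antisymm ?_ ?_
  · -- dist1 ≤ sup'
    set r := Finset.univ.sup' Finset.univ_nonempty
      (fun j : {i // c i < 0} => ((-(c j.1))⁻¹ • g j.1) x + bb j.1 * (c j.1)⁻¹) with hr
    refine (hchar x r).2 fun i => ?_
    rcases lt_or_eq_of_le (hcle i) with hci | hci
    · have hle : ((-(c i))⁻¹ • g i) x + bb i * (c i)⁻¹ ≤ r :=
        Finset.le_sup' (fun j : {i // c i < 0} => ((-(c j.1))⁻¹ • g j.1) x + bb j.1 * (c j.1)⁻¹)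
          (Finset.mem_univ (⟨i, hci⟩ : {i // c i < 0}))
      have heq : ((-(c i))⁻¹ • g i) x + bb i * (c i)⁻¹ = (bb i - g i x) / c i :=
        hform ⟨i, hci⟩
      rw [heq] at hle
      have := mul_le_mul_of_nonpos_right hle (le_of_lt hci)
      rw [div_mul_cancel₀ _ (ne_of_lt hci)] at this
      linarith
    · have := (hchar x (dist1 x P)).1 le_rfl i
      rw [hci, mul_zero] at this ⊢
      linarith
  · -- sup' ≤ dist1
    refine Finset.sup'_le _ _ fun j _ => ?_
    have h1 := (hchar x (dist1 x P)).1 le_rfl j.1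
    rw [hform j]
    rw [div_le_iff_of_neg j.2]
    linarith

/-- A closed (nonempty) set `S ⊆ ℝⁿ` is piecewise polyhedral if and only
if the 1-norm distance function `x ↦ dist₁(x;S)` is piecewise affine on `ℝⁿ`. -/
theorem stmt4 {n : ℕ} (S : Set (Fin n → ℝ)) (hcl : IsClosed S) (hne : S.Nonempty) :
    IsPiecewisePolyhedral S ↔ IsPiecewiseAffine (fun x => dist1 x S) := by
  classical
  constructor
  · rintro ⟨I, P, hpoly, hS⟩
    set K := {i : Fin I // (P i).Nonempty} with hK
    have hKne : Nonempty K := by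
      obtain ⟨x, hx⟩ := hne
      rw [hS] at hx
      obtain ⟨i, hi⟩ := mem_iUnion.1 hx
      exact ⟨⟨i, ⟨x, hi⟩⟩⟩
    have hSK : S = ⋃ k : K, P k.1 := by
      rw [hS]
      ext x
      simp only [mem_iUnion, Subtype.exists]
      constructor
      · rintro ⟨i, hi⟩
        exact ⟨⟨i, ⟨x, hi⟩⟩, hi⟩
      · rintro ⟨k, hk⟩
        exact ⟨k.1, hk⟩
    have hmax := fun k : K => dist1_poly_max ((isPolyhedron_iff_isPoly _).1 (hpoly k.1)) k.2
    choose J hJfin hJne a β hf using hmax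
    letI : ∀ k : K, Fintype (J k) := hJfin
    haveI : ∀ k : K, Nonempty (J k) := hJne
    have hdist : ∀ x, dist1 x S
        = Finset.univ.inf' Finset.univ_nonempty (fun k : K => dist1 x (P k.1)) := by
      intro x
      rw [hSK]
      exact dist1_iUnion _ (fun k => k.2) x
    set M := (∀ k : K, J k) × K with hM
    set Cell : M → Set (Fin n → ℝ) := fun m =>
      {x | (∀ (k : K) (j : J k), a k j x + β k j ≤ a k (m.1 k) x + β k (m.1 k)) ∧
        (∀ k : K, a m.2 (m.1 m.2) x + β m.2 (m.1 m.2) ≤ a k (m.1 k) x + β k (m.1 k))} with hCell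
    have hCellPoly : ∀ m, IsLPoly (Cell m) := by
      intro m
      refine ⟨(Σ k : K, J k) ⊕ K, inferInstance,
        Sum.elim (fun kj => a kj.1 kj.2 - a kj.1 (m.1 kj.1))
          (fun k => a m.2 (m.1 m.2) - a k (m.1 k)),
        Sum.elim (fun kj => β kj.1 (m.1 kj.1) - β kj.1 kj.2)
          (fun k => β k (m.1 k) - β m.2 (m.1 m.2)), ?_⟩
      ext x
      simp only [hCell, mem_setOf_eq, Sum.forall, Sigma.forall, Sum.elim_inl, Sum.elim_inr,
        LinearMap.sub_apply]
      constructor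
      · rintro ⟨h1, h2⟩
        exact ⟨fun k j => by linarith [h1 k j], fun k => by linarith [h2 k]⟩
      · rintro ⟨h1, h2⟩
        exact ⟨fun k j => by linarith [h1 k j], fun k => by linarith [h2 k]⟩
    have hCover : ∀ x, ∃ m : M, x ∈ Cell m := by
      intro x
      have hsel := fun k : K => Finset.exists_mem_eq_sup'
        (Finset.univ_nonempty (α := J k)) (fun j => a k j x + β k j)
      choose σ hσmem hσ using hsel
      obtain ⟨k0, _, hk0⟩ := Finset.exists_mem_eq_inf'
        (Finset.univ_nonempty (α := K)) (fun k => a k (σ k) x + β k (σ k))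
      refine ⟨(σ, k0), ⟨fun k j => ?_, fun k => ?_⟩⟩
      · rw [← hσ k]
        exact Finset.le_sup' (fun j => a k j x + β k j) (Finset.mem_univ j)
      · rw [← hk0]
        exact Finset.inf'_le _ (Finset.mem_univ k)
    have hVal : ∀ m : M, ∀ x ∈ Cell m, dist1 x S = a m.2 (m.1 m.2) x + β m.2 (m.1 m.2) := by
      intro m x hx
      rw [hdist]
      refine le_antisymm ?_ ?_
      · refine le_trans (Finset.inf'_le (fun k : K => dist1 x (P k.1)) (Finset.mem_univ m.2)) ?_
        rw [hf m.2]
        exact Finset.sup'_le _ _ fun j _ => hx.1 m.2 j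
      · refine Finset.le_inf' _ _ fun k _ => ?_
        refine le_trans (hx.2 k) ?_
        rw [hf k]
        exact Finset.le_sup' (fun j => a k j x + β k j) (Finset.mem_univ (m.1 k))
    refine ⟨dist1_continuous hne, Fintype.card M,
      fun i => Cell ((Fintype.equivFin M).symm i),
      fun i jj => a ((Fintype.equivFin M).symm i).2
        (((Fintype.equivFin M).symm i).1 ((Fintype.equivFin M).symm i).2) (Pi.single jj 1),
      fun i => β ((Fintype.equivFin M).symm i).2
        (((Fintype.equivFin M).symm i).1 ((Fintype.equivFin M).symm i).2), ?_, ?_, ?_⟩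
    · intro i
      exact (isPolyhedron_iff_isPoly _).2 (hCellPoly _)
    · rw [eq_univ_iff_forall]
      intro x
      obtain ⟨m, hm⟩ := hCover x
      refine mem_iUnion.2 ⟨Fintype.equivFin M m, ?_⟩
      rw [Equiv.symm_apply_apply]
      exact hm
    · intro i x hx
      have h1 := hVal _ x hx
      show dist1 x S = _
      rw [h1, ← linear_eq_sum]
  · rintro ⟨hcont, I, Pc, a, β, hpoly, hcover, hval⟩
    set L : Fin I → (Fin n → ℝ) →ₗ[ℝ] ℝ := fun i => ∑ j, a i j • LinearMap.proj j with hL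
    have hLval : ∀ i x, L i x = ∑ j, a i j * x j := by
      intro i x
      simp [hL, LinearMap.sum_apply, smul_eq_mul]
    set Q : Fin I → Set (Fin n → ℝ) :=
      fun i => Pc i ∩ {x | L i x ≤ -β i ∧ -(L i x) ≤ β i} with hQ
    have hQpoly : ∀ i, IsLPoly (Q i) := by
      intro i
      refine ((isPolyhedron_iff_isPoly _).1 (hpoly i)).inter
        ⟨Bool, inferInstance, fun b => cond b (L i) (-(L i)),
          fun b => cond b (-β i) (β i), ?_⟩
      ext x
      simp only [mem_setOf_eq, Bool.forall_bool, Bool.cond_false, Bool.cond_true,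
        LinearMap.neg_apply]
      tauto
    refine ⟨I, Q, fun i => (isPolyhedron_iff_isPoly _).2 (hQpoly i), ?_⟩
    ext x
    constructor
    · intro hx
      have hx0 : dist1 x S = 0 := (dist1_eq_zero_iff hcl hne x).2 hx
      have hxU : x ∈ ⋃ i, Pc i := by rw [hcover]; trivial
      obtain ⟨i, hi⟩ := mem_iUnion.1 hxU
      have hv := hval i x hi
      simp only at hv
      rw [hx0] at hv
      refine mem_iUnion.2 ⟨i, hi, ?_, ?_⟩ <;> rw [hLval] <;> linarith
    · intro hx
      obtain ⟨i, hi1, hi2, hi3⟩ := mem_iUnion.1 hx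
      have hv := hval i x hi1
      simp only at hv
      rw [hLval] at hi2 hi3
      have : dist1 x S = 0 := by rw [hv]; linarith
      exact (dist1_eq_zero_iff hcl hne x).1 this
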